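/- Let H₁, H₂ be Hilbert spaces, J₁ = [[I,0],[0,−I]] on H₁ ⊕ H₂ (a signature operator), and M : H₁ ⊕ H₂ → H₁ ⊕ H₂ a bounded operator written in block form M = [[M₁₁, M₁₂],[M₂₁, M₂₂]] satisfying both M* J₁ M ≼ J₁ and M J₁ M* ≼ J₁. Then M₂₂ is boundedly invertible and ‖M₂₂⁻¹ M₂₁‖ < 1. -/

import Mathlib

open ContinuousLinearMap
open scoped ComplexInnerProductSpace

set_option maxHeartbeats 1000000 in
/-- If the block operator `M = [[M₁₁,M₁₂],[M₂₁,M₂₂]]` on `H₁ ⊕ H₂` is a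
`J₁`-bi-contraction for `J₁ = diag(I,-I)` (expressed via the quadratic forms of
`M* J₁ M ≼ J₁` and `M J₁ M* ≼ J₁`), then `M₂₂` is boundedly invertible and
`‖M₂₂⁻¹ M₂₁‖ < 1`. -/
theorem bicontraction_corner_invertible
    {H1 H2 : Type*} [NormedAddCommGroup H1] [InnerProductSpace ℂ H1] [CompleteSpace H1]
    [NormedAddCommGroup H2] [InnerProductSpace ℂ H2] [CompleteSpace H2]
    (M11 : H1 →L[ℂ] H1) (M12 : H2 →L[ℂ] H1) (M21 : H1 →L[ℂ] H2) (M22 : H2 →L[ℂ] H2)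
    (hcontr : ∀ (x1 : H1) (x2 : H2),
      ‖M11 x1 + M12 x2‖ ^ 2 - ‖M21 x1 + M22 x2‖ ^ 2 ≤ ‖x1‖ ^ 2 - ‖x2‖ ^ 2)
    (hcocontr : ∀ (y1 : H1) (y2 : H2),
      ‖adjoint M11 y1 + adjoint M21 y2‖ ^ 2 - ‖adjoint M12 y1 + adjoint M22 y2‖ ^ 2
        ≤ ‖y1‖ ^ 2 - ‖y2‖ ^ 2) :
    ∃ N : H2 →L[ℂ] H2, M22 ∘L N = 1 ∧ N ∘L M22 = 1 ∧ ‖N ∘L M21‖ < 1 := by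
  -- key quadratic lower bounds
  have key1 : ∀ x2 : H2, ‖x2‖ ^ 2 ≤ ‖M22 x2‖ ^ 2 := by
    intro x2
    have := hcontr 0 x2
    simp only [map_zero, zero_add, norm_zero] at this
    nlinarith [sq_nonneg ‖M12 x2‖]
  have key2 : ∀ y2 : H2, ‖adjoint M21 y2‖ ^ 2 + ‖y2‖ ^ 2 ≤ ‖adjoint M22 y2‖ ^ 2 := by
    intro y2
    have := hcocontr 0 y2
    simp only [map_zero, zero_add, norm_zero] at this
    nlinarith
  have lb : ∀ x2 : H2, ‖x2‖ ≤ ‖M22 x2‖ := by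
    intro x2
    have h := key1 x2
    nlinarith [norm_nonneg (M22 x2), norm_nonneg x2]
  have lb' : ∀ y2 : H2, ‖y2‖ ≤ ‖adjoint M22 y2‖ := by
    intro y2
    have h := key2 y2
    nlinarith [norm_nonneg (adjoint M22 y2), norm_nonneg y2, sq_nonneg ‖adjoint M21 y2‖]
  -- injectivity
  have hanti : AntilipschitzWith 1 M22 :=
    M22.antilipschitz_of_bound (fun x => by simpa using lb x)
  have hker : LinearMap.ker (M22 : H2 →ₗ[ℂ] H2) = ⊥ :=
    LinearMap.ker_eq_bot.mpr hanti.injective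
  -- closed range
  have hclosed : IsClosed (Set.range M22) := hanti.isClosed_range M22.uniformContinuous
  have hclosed' : IsClosed ((LinearMap.range (M22 : H2 →ₗ[ℂ] H2) : Submodule ℂ H2) : Set H2) := by
    simpa [LinearMap.coe_range] using hclosed
  haveI : CompleteSpace (LinearMap.range (M22 : H2 →ₗ[ℂ] H2) : Submodule ℂ H2) := hclosed'.completeSpace_coe
  -- surjectivity
  have hsurj : LinearMap.range (M22 : H2 →ₗ[ℂ] H2) = ⊤ := by
    rw [← Submodule.orthogonal_eq_bot_iff]
    rw [Submodule.eq_bot_iff]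
    intro v hv
    have hadj : adjoint M22 v = 0 := by
      rw [← inner_self_eq_zero (𝕜 := ℂ)]
      rw [adjoint_inner_left, inner_eq_zero_symm]
      exact hv (M22 (adjoint M22 v)) ⟨_, rfl⟩
    have := lb' v
    rw [hadj, norm_zero] at this
    exact norm_eq_zero.mp (le_antisymm this (norm_nonneg v))
  set e := ContinuousLinearEquiv.ofBijective M22 hker hsurj with he
  refine ⟨(e.symm : H2 →L[ℂ] H2), ?_, ?_, ?_⟩
  · ext x
    exact ContinuousLinearEquiv.ofBijective_apply_symm_apply M22 hker hsurj x
  · ext x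
    exact ContinuousLinearEquiv.ofBijective_symm_apply_apply M22 hker hsurj x
  · -- norm bound
    set N : H2 →L[ℂ] H2 := (e.symm : H2 →L[ℂ] H2) with hN
    have hMN : N ∘L M22 = 1 := by
      ext x; exact ContinuousLinearEquiv.ofBijective_symm_apply_apply M22 hker hsurj x
    -- adjoint M22 (adjoint N z) = z
    have hadjid : ∀ z : H2, adjoint M22 (adjoint N z) = z := by
      intro z
      have : adjoint (N ∘L M22) = adjoint M22 ∘L adjoint N := adjoint_comp N M22
      rw [hMN] at this
      have h1 : (adjoint (1 : H2 →L[ℂ] H2)) = (1 : H2 →L[ℂ] H2) := by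
        ext w
        refine ext_inner_left ℂ fun u => ?_
        simp [adjoint_inner_right]
      rw [h1] at this
      have := congrArg (fun f => f z) this.symm
      simpa using this
    set c : ℝ := max ‖M22‖ 1 with hc
    have hc1 : (1:ℝ) ≤ c := le_max_right _ _
    have hc0 : (0:ℝ) < c := lt_of_lt_of_le one_pos hc1
    set k : ℝ := Real.sqrt (1 - 1 / c ^ 2) with hk
    have hk0 : 0 ≤ k := Real.sqrt_nonneg _
    have hnn : (0:ℝ) ≤ 1 - 1 / c ^ 2 := by
      have h1 : (1:ℝ) ≤ c ^ 2 := by nlinarith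
      have : 1 / c ^ 2 ≤ 1 := by
        rw [div_le_one (by positivity)]; exact h1
      linarith
    have hklt : k < 1 := by
      rw [hk]
      have hlt : 1 - 1 / c ^ 2 < 1 := by
        have : 0 < 1 / c ^ 2 := by positivity
        linarith
      calc Real.sqrt (1 - 1 / c ^ 2) < Real.sqrt 1 := Real.sqrt_lt_sqrt hnn hlt
        _ = 1 := Real.sqrt_one
    have hbound : ∀ z : H2, ‖adjoint (N ∘L M21) z‖ ≤ k * ‖z‖ := by
      intro z
      set y : H2 := adjoint N z with hy
      have h2 : ‖adjoint M21 y‖ ^ 2 + ‖y‖ ^ 2 ≤ ‖z‖ ^ 2 := by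
        have := key2 y
        rwa [hadjid z] at this
      have hzc : ‖z‖ ≤ c * ‖y‖ := by
        have h3 : ‖z‖ = ‖adjoint M22 y‖ := by rw [hadjid z]
        have h4 : ‖adjoint M22 y‖ ≤ ‖adjoint M22‖ * ‖y‖ := (adjoint M22).le_opNorm y
        have h5 : ‖adjoint M22‖ = ‖M22‖ := by
          simpa using (ContinuousLinearMap.adjoint (𝕜 := ℂ) (E := H2) (F := H2)).norm_map M22
        have h6 : ‖M22‖ ≤ c := le_max_left _ _
        calc ‖z‖ = ‖adjoint M22 y‖ := h3
          _ ≤ ‖adjoint M22‖ * ‖y‖ := h4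
          _ ≤ c * ‖y‖ := by rw [h5]; exact mul_le_mul_of_nonneg_right h6 (norm_nonneg y)
      have hysq : ‖z‖ ^ 2 / c ^ 2 ≤ ‖y‖ ^ 2 := by
        rw [div_le_iff₀ (by positivity)]
        nlinarith [norm_nonneg z, norm_nonneg y]
      have hsq : ‖adjoint M21 y‖ ^ 2 ≤ (k * ‖z‖) ^ 2 := by
        have hk2 : (k * ‖z‖) ^ 2 = (1 - 1 / c ^ 2) * ‖z‖ ^ 2 := by
          rw [mul_pow, hk, Real.sq_sqrt hnn]
        rw [hk2]
        have : (1 - 1 / c ^ 2) * ‖z‖ ^ 2 = ‖z‖ ^ 2 - ‖z‖ ^ 2 / c ^ 2 := by ring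
        rw [this]
        linarith
      have habs : ‖adjoint M21 y‖ ≤ k * ‖z‖ := by
        have h7 := Real.sqrt_le_sqrt hsq
        rwa [Real.sqrt_sq (norm_nonneg _), Real.sqrt_sq (by positivity)] at h7
      have hcomp : adjoint (N ∘L M21) z = adjoint M21 y := by
        rw [adjoint_comp, ContinuousLinearMap.comp_apply]
      rw [hcomp]
      exact habs
    have hnorm : ‖adjoint (N ∘L M21)‖ ≤ k :=
      ContinuousLinearMap.opNorm_le_bound _ hk0 hbound
    have heq : ‖N ∘L M21‖ = ‖adjoint (N ∘L M21)‖ := by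
      simpa using ((ContinuousLinearMap.adjoint (𝕜 := ℂ) (E := H1) (F := H2)).norm_map (N ∘L M21)).symm
    rw [heq]
    exact lt_of_le_of_lt hnorm hklt
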